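/- Let (A, m) be a Noetherian local domain. Then the quotient of the countable product A-module ∏_{n=1}^∞ A by the submodule of sequences converging to 0 in the m-adic topology (i.e., sequences (a_n) such that for each i, a_n ∈ m^i for all sufficiently large n) is a flat A-module. -/

import Mathlib

/-- The submodule of `∏_{n : ℕ} A` consisting of sequences converging to `0` in the
`m`-adic topology, where `m` is an ideal of `A`. -/
def nullSequences (A : Type u) [CommRing A] (m : Ideal A) : Submodule A (ℕ → A) where
  carrier := {a | ∀ i : ℕ, ∃ N : ℕ, ∀ n ≥ N, a n ∈ m ^ i}
  add_mem' := by
    intro a b ha hb i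
    obtain ⟨N₁, h₁⟩ := ha i
    obtain ⟨N₂, h₂⟩ := hb i
    exact ⟨max N₁ N₂, fun n hn =>
      add_mem (h₁ n (le_trans (le_max_left _ _) hn)) (h₂ n (le_trans (le_max_right _ _) hn))⟩
  zero_mem' := fun i => ⟨0, fun n _ => zero_mem _⟩
  smul_mem' := by
    intro c a ha i
    obtain ⟨N, h⟩ := ha i
    exact ⟨N, fun n hn => Ideal.mul_mem_left _ c (h n hn)⟩

/-- Decomposition of an element of `J * span (range f)` as a combination of the `f i`
with coefficients in `J`. -/
lemma exists_comb_of_mem_mul {A : Type u} [CommRing A] {ι : Type*} [Fintype ι]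
    (f : ι → A) (J : Ideal A) {a : A} (ha : a ∈ J * Ideal.span (Set.range f)) :
    ∃ c : ι → A, (∀ i, c i ∈ J) ∧ a = ∑ i, f i * c i := by
  refine Submodule.mul_induction_on ha ?_ ?_
  · intro r hr s hs
    obtain ⟨d, hd⟩ := (Submodule.mem_span_range_iff_exists_fun A).mp hs
    refine ⟨fun i => r * d i, fun i => Ideal.mul_mem_right _ _ hr, ?_⟩
    rw [← hd, Finset.mul_sum]
    exact Finset.sum_congr rfl fun i _ => by simp only [smul_eq_mul]; ring
  · rintro x y ⟨c, hc, rfl⟩ ⟨c', hc', rfl⟩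
    exact ⟨fun i => c i + c' i, fun i => add_mem (hc i) (hc' i),
      by rw [← Finset.sum_add_distrib]; exact Finset.sum_congr rfl fun i _ => by ring⟩

/-- Let `(A, m)` be a Noetherian local domain.  The quotient of the countable product
`∏_{n : ℕ} A` by the submodule of sequences converging to `0` in the `m`-adic topology is a
flat `A`-module. -/
theorem flat_product_quotient_nullSequences
    (A : Type u) [CommRing A] [IsDomain A] [IsNoetherianRing A] [IsLocalRing A] :
    Module.Flat A ((ℕ → A) ⧸ nullSequences A (IsLocalRing.maximalIdeal A)) := by
  classical
  set mI := IsLocalRing.maximalIdeal A with hmI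
  set NS := nullSequences A mI with hNS
  apply Module.Flat.of_forall_isTrivialRelation
  intro l f x hfx
  set I : Ideal A := Ideal.span (Set.range f) with hI
  -- lift the x i to sequences p i
  choose p hp using fun i => Submodule.Quotient.mk_surjective NS (x i)
  set z : ℕ → A := ∑ i, f i • p i with hzdef
  have hzNS : z ∈ NS := by
    rw [← Submodule.Quotient.mk_eq_zero]
    have : (NS.mkQ) z = 0 := by
      rw [hzdef, map_sum]
      simp only [map_smul, Submodule.mkQ_apply]
      simp only [hp]
      exact hfx
    simpa using this
  have hzI : ∀ m, z m ∈ I := by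
    intro m
    rw [hzdef]
    simp only [Finset.sum_apply, Pi.smul_apply, smul_eq_mul]
    exact Ideal.sum_mem _ fun i _ =>
      Ideal.mul_mem_right _ _ (Ideal.subset_span ⟨i, rfl⟩)
  -- Artin-Rees
  obtain ⟨k, hk⟩ := Ideal.exists_pow_inf_eq_pow_smul mI I
  have hAR : ∀ j m, z m ∈ mI ^ (j + k) → z m ∈ mI ^ j * I := by
    intro j m hm
    have h1 : z m ∈ mI ^ (j + k) • (⊤ : Submodule A A) ⊓ I := by
      refine ⟨?_, hzI m⟩
      simpa [Ideal.smul_eq_mul, Ideal.mul_top] using hm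
    rw [hk (j + k) (Nat.le_add_left k j)] at h1
    have h2 : mI ^ (j + k - k) • (mI ^ k • (⊤ : Submodule A A) ⊓ I) ≤ mI ^ j • I := by
      rw [Nat.add_sub_cancel]
      exact Submodule.smul_mono le_rfl inf_le_right
    simpa [Ideal.smul_eq_mul] using h2 h1
  -- the function t m
  set t : ℕ → ℕ := fun m => Nat.findGreatest (fun j => z m ∈ mI ^ j * I) m with ht
  have htspec : ∀ m, z m ∈ mI ^ (t m) * I := fun m =>
    Nat.findGreatest_spec (P := fun j => z m ∈ mI ^ j * I) (Nat.zero_le m) (by simpa using hzI m)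
  have htlarge : ∀ j : ℕ, ∃ N : ℕ, ∀ m ≥ N, j ≤ t m := by
    intro j
    obtain ⟨N, hN⟩ := hzNS (j + k)
    refine ⟨max N j, fun m hm => ?_⟩
    exact Nat.le_findGreatest (le_trans (le_max_right N j) hm)
      (hAR j m (hN m (le_trans (le_max_left N j) hm)))
  -- decompose z m
  choose c hc1 hc2 using fun m => exists_comb_of_mem_mul f (mI ^ (t m)) (htspec m)
  -- the null sequences n i
  set nseq : Fin l → ℕ → A := fun i m => c m i with hnseq
  have hnNS : ∀ i, nseq i ∈ NS := by
    intro i j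
    obtain ⟨N, hN⟩ := htlarge j
    exact ⟨N, fun m hm => Ideal.pow_le_pow_right (hN m hm) (hc1 m i)⟩
  set q : Fin l → ℕ → A := fun i => p i - nseq i with hq
  have hqmk : ∀ i, Submodule.Quotient.mk (q i) = x i := by
    intro i
    rw [hq]
    have : (NS.mkQ) (p i - nseq i) = x i := by
      rw [map_sub, Submodule.mkQ_apply, Submodule.mkQ_apply, hp,
        (Submodule.Quotient.mk_eq_zero NS).mpr (hnNS i), sub_zero]
    simpa using this
  have hqrel : ∀ m, ∑ i, f i * q i m = 0 := by
    intro m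
    have hzm : z m = ∑ i, f i * p i m := by
      rw [hzdef]; simp
    have : ∑ i, f i * q i m = z m - ∑ i, f i * nseq i m := by
      rw [hzm, ← Finset.sum_sub_distrib]
      exact Finset.sum_congr rfl fun i _ => by simp [hq]; ring
    rw [this, hc2 m, hnseq]
    rw [sub_eq_zero]
  -- syzygies
  set φ : (Fin l → A) →ₗ[A] A := Fintype.linearCombination A f with hφ
  obtain ⟨s, g, hg⟩ := Submodule.fg_iff_exists_fin_generating_family.mp
    (IsNoetherian.noetherian (LinearMap.ker φ))
  have hgker : ∀ j, ∑ i, f i * g j i = 0 := by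
    intro j
    have : g j ∈ LinearMap.ker φ := hg ▸ Submodule.subset_span ⟨j, rfl⟩
    have := LinearMap.mem_ker.mp this
    rw [hφ, Fintype.linearCombination_apply] at this
    rw [← this]
    exact Finset.sum_congr rfl fun i _ => by simp only [smul_eq_mul]; ring
  have hqker : ∀ m, (fun i => q i m) ∈ LinearMap.ker φ := by
    intro m
    rw [LinearMap.mem_ker, hφ, Fintype.linearCombination_apply]
    rw [← hqrel m]
    exact Finset.sum_congr rfl fun i _ => by simp [mul_comm]
  choose d hd using fun m => (Submodule.mem_span_range_iff_exists_fun A).mp (hg ▸ hqker m)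
  -- build the trivialization
  refine ⟨s, fun i j => g j i,
    fun j => Submodule.Quotient.mk (fun m => d m j), ?_, ?_⟩
  · intro i
    rw [← hqmk i]
    have : (∑ j : Fin s, (g j i) •
        (NS.mkQ (fun m => d m j))) = NS.mkQ (q i) := by
      simp only [← map_smul, ← map_sum]
      congr 1
      funext m
      have h := congrFun (hd m) i
      simp only [Finset.sum_apply, Pi.smul_apply, smul_eq_mul] at h ⊢
      rw [← h]
      exact Finset.sum_congr rfl fun j _ => mul_comm _ _
    simpa using this.symm
  · intro j
    exact hgker j
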